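/- Every stable, co-operative, reverse chronological sequence of mixed moves aligning a timing function γ of length n to a timing function σ of length n is cross co-operative, i.e., s_i·d_{i+1} ≤ 0 for all i < n. -/

import Mathlib

open Finset

namespace TimedAlign

variable {n : ℕ}

/-- The stamp move `stamp(γ, x, i)`: shift the timestamp at position `i` by `x`. -/
def stamp (γ : Fin n → ℝ) (x : ℝ) (i : Fin n) : Fin n → ℝ :=
  fun j => if j = i then γ j + x else γ j

/-- The delay move `delay(γ, x, i)`: shift all timestamps at positions `≥ i` by `x`. -/
def delay (γ : Fin n → ℝ) (x : ℝ) (i : Fin n) : Fin n → ℝ :=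
  fun j => if i ≤ j then γ j + x else γ j

/-- The mixed move `(s, d, i)`: a delay move followed by a stamp move at the same position. -/
def mixed (s d : ℝ) (i : Fin n) (γ : Fin n → ℝ) : Fin n → ℝ :=
  stamp (delay γ d i) s i

/-- The timestamp preceding position `i` (with the convention `τ(0) = 0`). -/
def prev (τ : Fin n → ℝ) (i : Fin n) : ℝ :=
  if (i : ℕ) = 0 then 0
  else τ ⟨(i : ℕ) - 1, lt_of_le_of_lt (Nat.sub_le _ _) i.isLt⟩

/-- The flow function of a timing function: `f_τ(1) = τ(1)`, `f_τ(i) = τ(i) - τ(i-1)`. -/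
def flow (τ : Fin n → ℝ) (i : Fin n) : ℝ := τ i - prev τ i

/-- Elementary moves: stamp moves and delay moves. -/
inductive Move (n : ℕ) where
  | stampM (x : ℝ) (i : Fin n)
  | delayM (x : ℝ) (i : Fin n)

def Move.apply : Move n → (Fin n → ℝ) → (Fin n → ℝ)
  | .stampM x i, γ => stamp γ x i
  | .delayM x i, γ => delay γ x i

def Move.cost : Move n → ℝ
  | .stampM x _ => |x|
  | .delayM x _ => |x|

/-- Apply a sequence of moves `m₁ m₂ ⋯ m_k`, with `m₁` first. -/
def applySeq (ms : List (Move n)) (γ : Fin n → ℝ) : Fin n → ℝ :=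
  ms.foldl (fun τ m => m.apply τ) γ

/-- The cost of a sequence of moves is the sum of the costs of its moves. -/
def seqCost (ms : List (Move n)) : ℝ := (ms.map Move.cost).sum

/-- The mixed-moves distance `d_N`: the minimum cost over all finite sequences of
stamp and delay moves aligning `τ₁` to `τ₂`. -/
noncomputable def dN (τ₁ τ₂ : Fin n → ℝ) : ℝ :=
  sInf {c : ℝ | ∃ ms : List (Move n), applySeq ms τ₁ = τ₂ ∧ seqCost ms = c}

/-- Apply the chronological sequence of mixed moves `(s₁,d₁,1)(s₂,d₂,2)⋯(s_n,d_n,n)`,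
in increasing order of positions. -/
def chronApply (s d : Fin n → ℝ) (γ : Fin n → ℝ) : Fin n → ℝ :=
  (List.finRange n).foldl (fun τ i => mixed (s i) (d i) i τ) γ

/-- Apply the reverse chronological sequence `(s_n,d_n,n)⋯(s₁,d₁,1)`,
in decreasing order of positions. -/
def revChronApply (s d : Fin n → ℝ) (γ : Fin n → ℝ) : Fin n → ℝ :=
  (List.finRange n).reverse.foldl (fun τ i => mixed (s i) (d i) i τ) γ

/-- The cost of a (reverse) chronological sequence of mixed moves. -/
def chronCost (s d : Fin n → ℝ) : ℝ := ∑ i, (|s i| + |d i|)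

/-- A sequence of mixed moves is co-operative if each move has `s·d ≥ 0`. -/
def Cooperative (s d : Fin n → ℝ) : Prop := ∀ i, 0 ≤ s i * d i

/-- The move at the last position is a pure delay (`s_n = 0`). -/
def LastStampZero (s : Fin n → ℝ) : Prop := ∀ i : Fin n, (i : ℕ) + 1 = n → s i = 0

/-- Cross co-operation: `s_i · d_{i+1} ≤ 0` for all `i < n`. -/
def CrossCooperative (s d : Fin n → ℝ) : Prop :=
  ∀ i : Fin n, ∀ h : (i : ℕ) + 1 < n, s i * d ⟨(i : ℕ) + 1, h⟩ ≤ 0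

/-- The stable choice of stamp given error `e` at the current position and
residual `r` at the next position. -/
noncomputable def stableStamp (e r : ℝ) : ℝ :=
  if 0 ≤ e * r then 0 else if |e| < |r| then e else -r

/-- Stability of the stamp components of a reverse chronological co-operative run
aligning `γ` to `σ`: writing `e_i = f_σ(i) - f_γ(i)` and `r_{i+1} = e_{i+1} - s_{i+1}`,
`s_i = 0` if `e_i·r_{i+1} ≥ 0`, `s_i = e_i` if moreover `|e_i| < |r_{i+1}|`,
and `s_i = -r_{i+1}` otherwise. -/
def Stable (γ σ s : Fin n → ℝ) : Prop :=
  ∀ i : Fin n, ∀ h : (i : ℕ) + 1 < n,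
    s i = stableStamp (flow σ i - flow γ i)
      ((flow σ ⟨(i : ℕ) + 1, h⟩ - flow γ ⟨(i : ℕ) + 1, h⟩) - s ⟨(i : ℕ) + 1, h⟩)

/-- `s_{i-1}`, with the convention `s₀ = 0`. -/
def sprev (s : Fin n → ℝ) (i : Fin n) : ℝ :=
  if (i : ℕ) = 0 then 0
  else s ⟨(i : ℕ) - 1, lt_of_le_of_lt (Nat.sub_le _ _) i.isLt⟩

lemma foldl_mixed (s d : Fin n → ℝ) (L : List (Fin n)) (γ : Fin n → ℝ) (j : Fin n) :
    (L.foldl (fun τ i => mixed (s i) (d i) i τ) γ) j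
      = γ j + (L.map (fun i => (if j = i then s i else 0) + (if i ≤ j then d i else 0))).sum := by
  induction L generalizing γ with
  | nil => simp
  | cons a L ih =>
    simp only [List.foldl_cons, List.map_cons, List.sum_cons, ih]
    have : mixed (s a) (d a) a γ j
        = γ j + ((if j = a then s a else 0) + (if a ≤ j then d a else 0)) := by
      simp only [mixed, stamp, delay]
      by_cases h1 : j = a <;> by_cases h2 : a ≤ j <;> simp [h1, h2] <;> ring
    rw [this]; ring

lemma revChron_apply_eq (s d γ : Fin n → ℝ) (j : Fin n) :
    revChronApply s d γ j = γ j + s j + ∑ i, (if i ≤ j then d i else 0) := by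
  rw [revChronApply, foldl_mixed, List.map_reverse, List.sum_reverse, ← Fin.sum_univ_def,
    Finset.sum_add_distrib, Finset.sum_ite_eq]
  simp [add_assoc]

lemma prev_succ (τ : Fin n → ℝ) (i : Fin n) (h : (i : ℕ) + 1 < n) :
    prev τ ⟨(i : ℕ) + 1, h⟩ = τ i := by
  simp [prev]

/-- every stable, co-operative, reverse chronological sequence of mixed moves
aligning `γ` to `σ` is cross co-operative. -/
theorem statement8 (n : ℕ) (γ σ s d : Fin n → ℝ)
    (halign : revChronApply s d γ = σ) (hcoop : Cooperative s d)
    (hlast : LastStampZero s) (hstable : Stable γ σ s) :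
    CrossCooperative s d := by
  intro i h
  set i' : Fin n := ⟨(i : ℕ) + 1, h⟩ with hi'
  have hσ : ∀ j, σ j = γ j + s j + ∑ k, (if k ≤ j then d k else 0) := by
    intro j; rw [← halign, revChron_apply_eq]
  -- the telescoping identity: d i' = e i' - s i' + s i
  have hD : (∑ k, (if k ≤ i' then d k else 0)) - (∑ k, (if k ≤ i then d k else 0)) = d i' := by
    rw [← Finset.sum_sub_distrib]
    have : ∀ k : Fin n, (if k ≤ i' then d k else 0) - (if k ≤ i then d k else 0)
        = if k = i' then d k else 0 := by
      intro k
      by_cases hk : k = i'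
      · subst hk
        have h1 : i' ≤ i' := le_refl _
        have h2 : ¬ (i' ≤ i) := by
          simp only [Fin.le_def, hi']; omega
        simp [h1, h2]
      · have : (k ≤ i') ↔ (k ≤ i) := by
          have hkv : (k : ℕ) ≠ (i : ℕ) + 1 := fun hc => hk (Fin.ext hc)
          simp only [Fin.le_def, hi']; omega
        by_cases h1 : k ≤ i <;> simp [this, h1, hk]
    rw [Finset.sum_congr rfl (fun k _ => this k), Finset.sum_ite_eq']
    simp
  have he' : flow σ i' - flow γ i' = s i' - s i + d i' := by
    simp only [flow, prev_succ _ _ h, hσ]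
    rw [show prev σ i' = σ i from prev_succ σ i h, show prev γ i' = γ i from prev_succ γ i h, hσ i]
    rw [← hD]; ring
  have hd : d i' = (flow σ i' - flow γ i' - s i') + s i := by linarith
  have hs := hstable i h
  rw [← hi'] at hs
  set e : ℝ := flow σ i - flow γ i
  set r : ℝ := flow σ i' - flow γ i' - s i'
  rw [hd]
  rw [stableStamp] at hs
  by_cases h1 : 0 ≤ e * r
  · simp only [h1, if_true] at hs
    simp [hs]
  · simp only [h1, if_false] at hs
    by_cases h2 : |e| < |r|
    · simp only [h2, if_true] at hs
      rw [hs]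
      have her : e * r < 0 := lt_of_not_ge h1
      nlinarith [abs_nonneg e, sq_abs e, sq_abs r, abs_mul e r, abs_of_neg her,
        mul_le_mul_of_nonneg_left (le_of_lt h2) (abs_nonneg e)]
    · simp only [h2, if_false] at hs
      rw [hs]; ring_nf
      nlinarith [sq_nonneg r]

end TimedAlign
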